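/- (Recursive inequality for renormalized sequences.) Let γ_1, …, γ_T be real numbers with 0 < γ_k < 1 for all 1 ≤ k ≤ T, and for 1 ≤ k ≤ T let γ_max^k = max{γ_1, …, γ_k}. Let α > 0, let β satisfy 0 < β < 1/γ_max^T, let i ≥ 1 be an integer, and define Ψ(k) = α·(γ_max^k)^i · Σ_{j=0}^{k−1} (1 − γ_max^k·β)^j. Then for every 1 ≤ k ≤ T − 1, (1 − γ_{k+1}·β)·Ψ(k) + (γ_{k+1})^i·α ≤ Ψ(k+1). -/

import Mathlib

set_option maxHeartbeats 1000000 in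
/-- Recursive inequality for renormalized sequences: with
`γ_max^k = max{γ_1, …, γ_k}` and
`Ψ(k) = α(γ_max^k)^i ∑_{j=0}^{k−1} (1 − γ_max^k β)^j`, for every
`1 ≤ k ≤ T − 1`, `(1 − γ_{k+1}β)Ψ(k) + (γ_{k+1})^i α ≤ Ψ(k+1)`. -/
theorem recursive_inequality_renormalized (T : ℕ) (hT : 1 ≤ T)
    (γ : ℕ → ℝ)
    (hγ : ∀ k, 1 ≤ k → k ≤ T → 0 < γ k ∧ γ k < 1)
    (γmax : ℕ → ℝ)
    (hγmax : ∀ k, ∀ hk : 1 ≤ k, k ≤ T →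
      γmax k = (Finset.Icc 1 k).sup' (Finset.nonempty_Icc.mpr hk) γ)
    (α β : ℝ) (hα : 0 < α) (hβ0 : 0 < β) (hβ : β < 1 / γmax T)
    (i : ℕ) (hi : 1 ≤ i)
    (Ψ : ℕ → ℝ)
    (hΨ : ∀ k, 1 ≤ k → k ≤ T →
      Ψ k = α * (γmax k) ^ i * ∑ j ∈ Finset.range k, (1 - γmax k * β) ^ j) :
    ∀ k, 1 ≤ k → k ≤ T - 1 →
      (1 - γ (k + 1) * β) * Ψ k + (γ (k + 1)) ^ i * α ≤ Ψ (k + 1) := by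
  intro k hk1 hkT
  have hk1T : k ≤ T := by omega
  have hk2T : k + 1 ≤ T := by omega
  obtain ⟨hg0, hg1⟩ := hγ (k+1) (by omega) hk2T
  set g := γ (k+1) with hgdef
  -- positivity of γmax
  have hpos : ∀ a, 1 ≤ a → a ≤ T → 0 < γmax a := by
    intro a ha haT
    rw [hγmax a ha haT]
    exact lt_of_lt_of_le (hγ a ha haT).1
      (Finset.le_sup' γ (Finset.mem_Icc.mpr ⟨ha, le_rfl⟩))
  -- monotonicity of γmax
  have hmono : ∀ a b : ℕ, 1 ≤ a → a ≤ b → b ≤ T → γmax a ≤ γmax b := by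
    intro a b ha hab hbT
    rw [hγmax a ha (le_trans hab hbT), hγmax b (le_trans ha hab) hbT]
    apply Finset.sup'_le
    intro j hj
    apply Finset.le_sup'
    simp only [Finset.mem_Icc] at hj ⊢
    omega
  have hTpos : 0 < γmax T := hpos T hT le_rfl
  have hTβ : γmax T * β < 1 := by
    have := (lt_div_iff₀ hTpos).mp hβ
    nlinarith
  have hm_le_T : γmax k ≤ γmax T := hmono k T hk1 hk1T le_rfl
  have hg_le_M : g ≤ γmax (k+1) := by
    rw [hγmax (k+1) (by omega) hk2T]
    exact Finset.le_sup' γ (Finset.mem_Icc.mpr ⟨by omega, le_rfl⟩)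
  have hm_le_M : γmax k ≤ γmax (k+1) := hmono k (k+1) hk1 (by omega) hk2T
  have hM_le_max : γmax (k+1) ≤ max g (γmax k) := by
    rw [hγmax (k+1) (by omega) hk2T]
    apply Finset.sup'_le
    intro j hj
    simp only [Finset.mem_Icc] at hj
    by_cases hj' : j = k + 1
    · subst hj'; exact le_max_left _ _
    · refine le_trans ?_ (le_max_right g (γmax k))
      rw [hγmax k hk1 hk1T]
      exact Finset.le_sup' γ (Finset.mem_Icc.mpr ⟨hj.1, by omega⟩)
  have hMeq : γmax (k+1) = max g (γmax k) :=
    le_antisymm hM_le_max (max_le hg_le_M hm_le_M)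
  have hg_le_T : g ≤ γmax T := le_trans hg_le_M (hmono (k+1) T (by omega) hk2T le_rfl)
  have hmpos : 0 < γmax k := hpos k hk1 hk1T
  have hmβ : γmax k * β < 1 := by nlinarith
  have hgβ : g * β < 1 := by nlinarith
  have h1mβ : 0 ≤ 1 - γmax k * β := by linarith
  have h1gβ : 0 ≤ 1 - g * β := by linarith
  obtain ⟨n, rfl⟩ : ∃ n, i = n + 1 := ⟨i - 1, by omega⟩
  rw [hΨ k hk1 hk1T, hΨ (k+1) (by omega) hk2T]
  set Sm := ∑ j ∈ Finset.range k, (1 - γmax k * β) ^ j with hSm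
  have hSm0 : 0 ≤ Sm := Finset.sum_nonneg fun j _ => pow_nonneg h1mβ j
  have hidm : γmax k * β * Sm = 1 - (1 - γmax k * β) ^ k := by
    have := geom_sum_mul (1 - γmax k * β) k
    rw [← hSm] at this
    nlinarith [this]
  have hqm0 : 0 ≤ (1 - γmax k * β) ^ k := pow_nonneg h1mβ k
  rcases le_total g (γmax k) with hgm | hgm
  · -- case g ≤ γmax k : γmax (k+1) = γmax k
    have hMM : γmax (k+1) = γmax k := by rw [hMeq, max_eq_right hgm]
    rw [hMM, geom_sum_succ, ← hSm]
    have hgn : g ^ n ≤ (γmax k) ^ n := pow_le_pow_left₀ hg0.le hgm n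
    have hmn0 : (0:ℝ) ≤ (γmax k) ^ n := pow_nonneg hmpos.le n
    have key : (1 - g * β) * ((γmax k) ^ (n+1) * Sm) + g ^ (n+1)
        ≤ (γmax k) ^ (n+1) * ((1 - γmax k * β) * Sm + 1) := by
      rw [pow_succ, pow_succ]
      have hidm' : (γmax k) ^ n * (γmax k - g) * (γmax k * β * Sm)
          = (γmax k) ^ n * (γmax k - g) * (1 - (1 - γmax k * β) ^ k) := by
        rw [hidm]
      nlinarith [mul_nonneg (mul_nonneg hmn0 (sub_nonneg.mpr hgm)) hqm0,
        mul_le_mul_of_nonneg_right hgn hg0.le, hidm']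
    linarith [mul_le_mul_of_nonneg_left key hα.le]
  · -- case γmax k ≤ g : γmax (k+1) = g
    have hMM : γmax (k+1) = g := by rw [hMeq, max_eq_left hgm]
    rw [hMM, geom_sum_succ]
    set Sg := ∑ j ∈ Finset.range k, (1 - g * β) ^ j with hSg
    have hSg0 : 0 ≤ Sg := Finset.sum_nonneg fun j _ => pow_nonneg h1gβ j
    have hidg : g * β * Sg = 1 - (1 - g * β) ^ k := by
      have := geom_sum_mul (1 - g * β) k
      rw [← hSg] at this
      nlinarith [this]
    have hqle : (1 - g * β) ^ k ≤ (1 - γmax k * β) ^ k :=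
      pow_le_pow_left₀ h1gβ (by nlinarith) k
    have hS1 : γmax k * Sm ≤ g * Sg := by
      have h2 : β * (γmax k * Sm) ≤ β * (g * Sg) := by
        have : γmax k * β * Sm ≤ g * β * Sg := by rw [hidm, hidg]; linarith
        linarith [this]
      exact (mul_le_mul_iff_right₀ hβ0).mp h2
    have hgn : (γmax k) ^ n ≤ g ^ n := pow_le_pow_left₀ hmpos.le hgm n
    have hmn0 : (0:ℝ) ≤ (γmax k) ^ n := pow_nonneg hmpos.le n
    have key : (γmax k) ^ (n+1) * Sm ≤ g ^ (n+1) * Sg := by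
      rw [pow_succ, pow_succ]
      calc (γmax k) ^ n * γmax k * Sm ≤ (γmax k) ^ n * (g * Sg) := by
            rw [mul_assoc]; exact mul_le_mul_of_nonneg_left hS1 hmn0
        _ ≤ g ^ n * (g * Sg) :=
            mul_le_mul_of_nonneg_right hgn (mul_nonneg hg0.le hSg0)
        _ = g ^ n * g * Sg := by ring
    have key2 : (1 - g * β) * ((γmax k) ^ (n+1) * Sm)
        ≤ (1 - g * β) * (g ^ (n+1) * Sg) := mul_le_mul_of_nonneg_left key h1gβ
    linarith [mul_le_mul_of_nonneg_left key2 hα.le]
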